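/- arXiv:1807.02003 — 3 statements merged into one kernel-verified Lean document; each statement's English description precedes it below -/
import Mathlib

section
/- Assume the integrability condition C := ∫_{supp(h)} |g(s)| |h(s)|^{−(c+1)/2} ds < ∞, and let w : ℝ× → ℂ be continuous with support contained in a compact subset of ℝ×. Then the function x ↦ |x|^{(c+1)/2}(𝒢w)(x) belongs to L¹(ℝ×, dx/|x|), and for Lebesgue-almost every y ∈ ℝ×: ∫_{ℝ×} |x|^{(c+1)/2} (𝒢w)(x) e^{−i log|x|·log|y|} e^{iπ δ(x)δ(y)} dx/|x| = μ(y) · ∫_{ℝ×} |x|^{(c+1)/2} w(x) e^{−i log|x|·log|y|} e^{iπ δ(x)δ(y)} dx/|x|. In other words, the multiplicative Fourier transform intertwines 𝒢 (conjugated by the multiplication map M : φ ↦ |x|^{(c+1)/2}φ) with multiplication by μ. -/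
open MeasureTheory Real Set Complex

noncomputable section

/-- The Haar measure `dx/|x|` of the multiplicative group `ℝ× = ℝ \ {0}`. -/
def mulHaar : Measure ℝ := volume.withDensity fun x => ENNReal.ofReal |x|⁻¹

/-- `δ(x) = 0` for `x > 0` and `δ(x) = 1` for `x < 0`. -/
def deltaSgn (x : ℝ) : ℝ := if x < 0 then 1 else 0

/-- The operator `𝒢`, acting by `(𝒢 w)(x) = ∫_{supp h} g(s) w(h(s)x) ds`. -/
def Gop {d : ℕ} (g h : (Fin d → ℝ) → ℝ) (w : ℝ → ℂ) (x : ℝ) : ℂ :=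
  ∫ s in {s | h s ≠ 0}, (g s : ℂ) * w (h s * x)

/-- The function `m₊` from the paper. -/
def mPlus {d : ℕ} (c : ℝ) (g h : (Fin d → ℝ) → ℝ) (x : ℝ) : ℂ :=
  ∫ s in {s | h s ≠ 0},
    (g s : ℂ) * ((|h s| ^ (-(c + 1) / 2) : ℝ) : ℂ) *
      Complex.exp (Complex.I * x * Real.log |h s|)

/-- The function `m₋` from the paper. -/
def mMinus {d : ℕ} (c : ℝ) (g h : (Fin d → ℝ) → ℝ) (x : ℝ) : ℂ :=
  ∫ s in {s | h s ≠ 0},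
    (g s : ℂ) * ((|h s| ^ (-(c + 1) / 2) : ℝ) : ℂ) *
      Complex.exp (Complex.I * x * Real.log |h s|) * (Real.sign (h s) : ℂ)

/-- The function `μ` on `ℝ×`. -/
def muFun {d : ℕ} (c : ℝ) (g h : (Fin d → ℝ) → ℝ) (y : ℝ) : ℂ :=
  if 0 < y then mPlus c g h (Real.log |y|) else mMinus c g h (Real.log |y|)

/-- The multiplicative character kernel `e^{-i log|x| log|y|} e^{iπ δ(x)δ(y)}`. -/
def mulChar' (x y : ℝ) : ℂ :=
  Complex.exp (-(Complex.I) * Real.log |x| * Real.log |y|) *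
    Complex.exp (Complex.I * Real.pi * deltaSgn x * deltaSgn y)

/-! ### Auxiliary lemmas -/

lemma mulHaar_eq :
    mulHaar = volume.withDensity fun x => ((Real.toNNReal |x|⁻¹ : NNReal) : ENNReal) := rfl

lemma measurable_dens : Measurable fun x : ℝ => Real.toNNReal |x|⁻¹ :=
  measurable_real_toNNReal.comp (measurable_abs.inv)

lemma integral_mulHaar (f : ℝ → ℂ) :
    ∫ x, f x ∂mulHaar = ∫ x, |x|⁻¹ • f x := by
  rw [mulHaar_eq, integral_withDensity_eq_integral_smul measurable_dens]
  refine integral_congr_ae (Filter.Eventually.of_forall fun x => ?_)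
  simp only [NNReal.smul_def, Real.coe_toNNReal _ (inv_nonneg.2 (abs_nonneg x))]

lemma integrable_mulHaar_iff (f : ℝ → ℂ) :
    Integrable f mulHaar ↔ Integrable (fun x => |x|⁻¹ • f x) volume := by
  rw [mulHaar_eq, integrable_withDensity_iff_integrable_smul measurable_dens]
  constructor <;> intro hf <;> refine hf.congr (Filter.Eventually.of_forall fun x => ?_) <;>
    simp only [NNReal.smul_def, Real.coe_toNNReal _ (inv_nonneg.2 (abs_nonneg x))]

lemma measurable_deltaSgn : Measurable deltaSgn := by
  unfold deltaSgn
  exact Measurable.ite (measurableSet_lt measurable_id measurable_const)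
    measurable_const measurable_const

lemma measurable_mulChar' (y : ℝ) : Measurable fun x => mulChar' x y := by
  unfold mulChar'
  refine Measurable.mul ?_ ?_
  · exact Complex.measurable_exp.comp
      (((measurable_const.mul
        (Complex.measurable_ofReal.comp (Real.measurable_log.comp measurable_abs)))).mul
        measurable_const)
  · exact Complex.measurable_exp.comp
      ((measurable_const.mul (Complex.measurable_ofReal.comp measurable_deltaSgn)).mul
        measurable_const)

lemma norm_mulChar' (x y : ℝ) : ‖mulChar' x y‖ = 1 := by
  unfold mulChar'
  rw [norm_mul, Complex.norm_exp, Complex.norm_exp]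
  norm_num [Complex.mul_re, Complex.mul_im]

lemma integral_rpow_smul_comp_mul_left {E : Type*} [NormedAddCommGroup E] [NormedSpace ℝ E]
    [CompleteSpace E]
    (ρ a : ℝ) (ha : a ≠ 0) (f : ℝ → E) :
    ∫ x : ℝ, (|x| ^ ρ : ℝ) • f (a * x) = (|a| ^ (-ρ - 1) : ℝ) • ∫ x : ℝ, (|x| ^ ρ : ℝ) • f x := by
  have hA : (0:ℝ) < |a| := abs_pos.2 ha
  have h1 : ∀ x : ℝ, (|x| ^ ρ : ℝ) • f (a * x)
      = (fun u => (|a| ^ (-ρ) * |u| ^ ρ : ℝ) • f u) (a * x) := by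
    intro x
    simp only
    congr 1
    rw [abs_mul, Real.mul_rpow (abs_nonneg a) (abs_nonneg x), ← mul_assoc,
      ← Real.rpow_add hA]
    rw [show -ρ + ρ = 0 by ring, Real.rpow_zero, one_mul]
  calc ∫ x : ℝ, (|x| ^ ρ : ℝ) • f (a * x)
      = ∫ x : ℝ, (fun u => (|a| ^ (-ρ) * |u| ^ ρ : ℝ) • f u) (a * x) := by simp_rw [h1]
    _ = |a⁻¹| • ∫ u, (|a| ^ (-ρ) * |u| ^ ρ : ℝ) • f u :=
        MeasureTheory.Measure.integral_comp_mul_left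
          (fun u => (|a| ^ (-ρ) * |u| ^ ρ : ℝ) • f u) a
    _ = (|a| ^ (-ρ - 1) : ℝ) • ∫ x : ℝ, (|x| ^ ρ : ℝ) • f x := by
        simp_rw [mul_smul]
        rw [integral_smul, smul_smul, abs_inv]
        congr 1
        rw [← Real.rpow_neg_one |a|, ← Real.rpow_add hA]
        ring_nf

lemma integrable_rpow_smul_comp_mul_left {E : Type*} [NormedAddCommGroup E] [NormedSpace ℝ E]
    (ρ a : ℝ) (ha : a ≠ 0) (f : ℝ → E)
    (hf : Integrable (fun x => (|x| ^ ρ : ℝ) • f x) volume) :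
    Integrable (fun x => (|x| ^ ρ : ℝ) • f (a * x)) volume := by
  have hA : (0:ℝ) < |a| := abs_pos.2 ha
  have h1 : ∀ x : ℝ, (|x| ^ ρ : ℝ) • f (a * x)
      = (fun u => (|a| ^ (-ρ) * |u| ^ ρ : ℝ) • f u) (a * x) := by
    intro x
    simp only
    congr 1
    rw [abs_mul, Real.mul_rpow (abs_nonneg a) (abs_nonneg x), ← mul_assoc,
      ← Real.rpow_add hA]
    rw [show -ρ + ρ = 0 by ring, Real.rpow_zero, one_mul]
  have h2 : Integrable (fun u => (|a| ^ (-ρ) * |u| ^ ρ : ℝ) • f u) volume := by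
    refine (hf.smul (|a| ^ (-ρ) : ℝ)).congr (Filter.Eventually.of_forall fun x => ?_)
    simp only [Pi.smul_apply, mul_smul]
  have h3 := (integrable_comp_mul_left_iff
    (fun u => (|a| ^ (-ρ) * |u| ^ ρ : ℝ) • f u) ha).2 h2
  exact h3.congr (Filter.Eventually.of_forall fun x => (h1 x).symm)

lemma w_continuous {w : ℝ → ℂ} {K : Set ℝ}
    (hw : ContinuousOn w {x | x ≠ 0}) (hK : IsCompact K) (hK0 : K ⊆ {x | x ≠ 0})
    (hwK : ∀ x ∉ K, w x = 0) : Continuous w := by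
  rw [continuous_iff_continuousAt]
  intro x
  rcases eq_or_ne x 0 with rfl | hx
  · have hmem : Kᶜ ∈ nhds (0:ℝ) :=
      hK.isClosed.isOpen_compl.mem_nhds (fun h0 => hK0 h0 rfl)
    have hev : w =ᶠ[nhds (0:ℝ)] fun _ => 0 :=
      Filter.eventually_of_mem hmem fun z hz => hwK z hz
    exact ContinuousAt.congr continuousAt_const hev.symm
  · exact hw.continuousAt (IsOpen.mem_nhds isOpen_ne hx)

lemma mulChar'_div (a u y : ℝ) (ha : a ≠ 0) (hu : u ≠ 0) (hy : y ≠ 0) :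
    mulChar' (u / a) y
      = (Complex.exp (Complex.I * Real.log |a| * Real.log |y|) *
          (if y < 0 then (Real.sign a : ℂ) else 1)) * mulChar' u y := by
  have epi : Complex.exp (Complex.I * (π:ℂ)) = -1 := by
    rw [mul_comm]; exact Complex.exp_pi_mul_I
  have hlog : Real.log |u / a| = Real.log |u| - Real.log |a| := by
    rw [abs_div, Real.log_div (abs_ne_zero.2 hu) (abs_ne_zero.2 ha)]
  have key : Complex.exp (Complex.I * (π:ℂ) * (deltaSgn (u/a) : ℂ) * (deltaSgn y : ℂ))
      = (if y < 0 then (Real.sign a : ℂ) else 1) *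
        Complex.exp (Complex.I * (π:ℂ) * (deltaSgn u : ℂ) * (deltaSgn y : ℂ)) := by
    rcases lt_or_gt_of_ne hy with hy' | hy'
    · have hdy : deltaSgn y = 1 := if_pos hy'
      rw [hdy, if_pos hy']
      rcases lt_or_gt_of_ne ha with ha' | ha'
      · have hsgn : (Real.sign a : ℂ) = -1 := by rw [Real.sign_of_neg ha']; norm_num
        rcases lt_or_gt_of_ne hu with hu' | hu'
        · have h1 : deltaSgn (u / a) = 0 :=
            if_neg (not_lt.2 (le_of_lt (div_pos_of_neg_of_neg hu' ha')))
          have h2 : deltaSgn u = 1 := if_pos hu'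
          rw [h1, h2, hsgn]
          push_cast
          simp [epi, mul_comm, mul_assoc]
        · have h1 : deltaSgn (u / a) = 1 := if_pos (div_neg_of_pos_of_neg hu' ha')
          have h2 : deltaSgn u = 0 := if_neg (not_lt.2 hu'.le)
          rw [h1, h2, hsgn]
          push_cast
          simp [epi, mul_comm, mul_assoc]
      · have hsgn : (Real.sign a : ℂ) = 1 := by rw [Real.sign_of_pos ha']; norm_num
        have h1 : deltaSgn (u / a) = deltaSgn u := by
          unfold deltaSgn
          rcases lt_or_gt_of_ne hu with hu' | hu'
          · rw [if_pos (div_neg_of_neg_of_pos hu' ha'), if_pos hu']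
          · rw [if_neg (not_lt.2 (div_pos hu' ha').le), if_neg (not_lt.2 hu'.le)]
        rw [h1, hsgn, one_mul]
    · have hdy : deltaSgn y = 0 := if_neg (not_lt.2 hy'.le)
      rw [hdy, if_neg (not_lt.2 hy'.le)]
      push_cast
      simp
  unfold mulChar'
  rw [hlog]
  push_cast
  rw [show -Complex.I * ((Real.log |u| : ℂ) - (Real.log |a| : ℂ)) * (Real.log |y| : ℂ)
      = (-Complex.I * (Real.log |u| : ℂ) * (Real.log |y| : ℂ))
        + (Complex.I * (Real.log |a| : ℂ) * (Real.log |y| : ℂ)) by ring,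
    Complex.exp_add]
  rw [key]
  ring

/-- Under the integrability condition, for `w` continuous on `ℝ×` with
support contained in a compact subset of `ℝ×`, the function `x ↦ |x|^{(c+1)/2} (𝒢w)(x)`
lies in `L¹(ℝ×, dx/|x|)`, and for a.e. `y ∈ ℝ×` the multiplicative Fourier transform of
`M(𝒢w)` equals `μ(y)` times that of `Mw`: the multiplicative Fourier transform
intertwines `𝒢` (conjugated by `M : φ ↦ |x|^{(c+1)/2} φ`) with multiplication by `μ`. -/
theorem fourier_intertwines_G_with_multiplication
    (d : ℕ) (hd : 1 ≤ d) (c : ℝ) (g h : (Fin d → ℝ) → ℝ)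
    (hg : Measurable g) (hh : Measurable h)
    (hC : IntegrableOn (fun s => |g s| * |h s| ^ (-(c + 1) / 2)) {s | h s ≠ 0} volume)
    (w : ℝ → ℂ) (hw : ContinuousOn w {x | x ≠ 0})
    (K : Set ℝ) (hK : IsCompact K) (hK0 : K ⊆ {x | x ≠ 0})
    (hwK : ∀ x ∉ K, w x = 0) :
    Integrable (fun x => ((|x| ^ ((c + 1) / 2) : ℝ) : ℂ) * Gop g h w x) mulHaar ∧
    ∀ᵐ y : ℝ ∂volume, y ≠ 0 →
      (∫ x, ((|x| ^ ((c + 1) / 2) : ℝ) : ℂ) * Gop g h w x * mulChar' x y ∂mulHaar) =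
        muFun c g h y *
          ∫ x, ((|x| ^ ((c + 1) / 2) : ℝ) : ℂ) * w x * mulChar' x y ∂mulHaar := by
  classical
  set S : Set (Fin d → ℝ) := {s | h s ≠ 0} with hSdef
  have hS : MeasurableSet S := (hh (measurableSet_singleton 0)).compl
  set ρ : ℝ := (c - 1) / 2 with hρ
  have hρeq : (-ρ - 1 : ℝ) = -(c + 1) / 2 := by rw [hρ]; ring
  have hwc : Continuous w := w_continuous hw hK hK0 hwK
  have habs : ContinuousOn (fun u : ℝ => |u| ^ ρ) {x : ℝ | x ≠ 0} := fun x hx =>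
    ((Real.continuousAt_rpow_const _ _ (Or.inl (abs_ne_zero.2 hx))).comp
      continuous_abs.continuousAt).continuousWithinAt
  have hWcont : Continuous (fun u => (|u| ^ ρ : ℝ) • w u) :=
    w_continuous (habs.smul hw) hK hK0 (fun x hx => by simp [hwK x hx])
  have hWint : Integrable (fun u => (|u| ^ ρ : ℝ) • w u) volume :=
    hWcont.integrable_of_hasCompactSupport
      (HasCompactSupport.intro hK (fun x hx => by simp [hwK x hx]))
  have hWnint : Integrable (fun u => (|u| ^ ρ : ℝ) • ‖w u‖) volume := by
    refine hWint.norm.congr (Filter.Eventually.of_forall fun u => ?_)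
    show ‖(|u| ^ ρ : ℝ) • w u‖ = (|u| ^ ρ : ℝ) • ‖w u‖
    rw [norm_smul, Real.norm_eq_abs, _root_.abs_of_nonneg (Real.rpow_nonneg (abs_nonneg u) ρ),
      smul_eq_mul]
  set Cw : ℝ := ∫ u, (|u| ^ ρ : ℝ) • ‖w u‖ ∂volume with hCwdef
  set F : (Fin d → ℝ) × ℝ → ℂ :=
    fun p => (g p.1 : ℂ) * ((|p.2| ^ ρ : ℝ) : ℂ) * w (h p.1 * p.2) with hFdef
  have hFmeas : Measurable F := by
    refine Measurable.mul (Measurable.mul ?_ ?_) ?_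
    · exact Complex.measurable_ofReal.comp (hg.comp measurable_fst)
    · exact Complex.measurable_ofReal.comp
        ((by fun_prop : Measurable fun x : ℝ => |x| ^ ρ).comp measurable_snd)
    · exact hwc.measurable.comp ((hh.comp measurable_fst).mul measurable_snd)
  have hFaem : AEStronglyMeasurable F ((volume.restrict S).prod volume) :=
    hFmeas.aestronglyMeasurable
  have h0 : ∀ᵐ x : ℝ ∂(volume : Measure ℝ), x ≠ 0 := by
    rw [ae_iff]
    simp only [ne_eq, not_not, Set.setOf_eq_eq_singleton]
    exact measure_singleton 0
  have hweight : ∀ x : ℝ, x ≠ 0 → (|x|⁻¹ : ℝ) * |x| ^ ((c + 1) / 2) = |x| ^ ρ := by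
    intro x hx
    rw [← Real.rpow_neg_one, ← Real.rpow_add (abs_pos.2 hx)]
    congr 1
    rw [hρ]; ring
  have hInner : ∀ s, h s ≠ 0 → Integrable (fun x => F (s, x)) volume := by
    intro s hs
    have h2 : Integrable (fun x => (|x| ^ ρ : ℝ) • w (h s * x)) volume :=
      integrable_rpow_smul_comp_mul_left ρ (h s) hs w hWint
    refine (h2.const_mul (g s : ℂ)).congr (Filter.Eventually.of_forall fun x => ?_)
    show (g s : ℂ) * ((|x| ^ ρ : ℝ) • w (h s * x)) = F (s, x)
    simp only [hFdef, Complex.real_smul]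
    ring
  have hNorm : ∀ s, h s ≠ 0 →
      (∫ x, ‖F (s, x)‖ ∂volume) = |g s| * ((|h s| ^ (-(c + 1) / 2) : ℝ) * Cw) := by
    intro s hs
    have h1 : ∀ x : ℝ, ‖F (s, x)‖ = |g s| * ((|x| ^ ρ : ℝ) • ‖w (h s * x)‖) := by
      intro x
      simp only [hFdef, norm_mul, Complex.norm_real, Real.norm_eq_abs, smul_eq_mul]
      rw [_root_.abs_of_nonneg (Real.rpow_nonneg (abs_nonneg x) ρ)]
      ring
    simp_rw [h1]
    rw [MeasureTheory.integral_const_mul]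
    congr 1
    rw [integral_rpow_smul_comp_mul_left ρ (h s) hs (fun u => ‖w u‖), smul_eq_mul, hρeq]
  have hFint : Integrable F ((volume.restrict S).prod volume) := by
    rw [integrable_prod_iff hFaem]
    constructor
    · exact (ae_restrict_iff' hS).2
        (Filter.Eventually.of_forall fun s hs => hInner s hs)
    · refine (hC.mul_const Cw).congr
        ((ae_restrict_iff' hS).2 (Filter.Eventually.of_forall fun s hs => ?_))
      show |g s| * |h s| ^ (-(c + 1) / 2) * Cw = ∫ x, ‖F (s, x)‖ ∂volume
      rw [hNorm s hs]; ring
  have hGrep : ∀ x : ℝ, (∫ s in S, F (s, x) ∂volume) = ((|x| ^ ρ : ℝ) : ℂ) * Gop g h w x := by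
    intro x
    rw [Gop, ← MeasureTheory.integral_const_mul]
    refine setIntegral_congr_fun hS fun s _ => ?_
    simp only [hFdef]; ring
  have hGprod : Integrable (fun x => ∫ s in S, F (s, x) ∂volume) volume :=
    hFint.integral_prod_right
  have part1 : Integrable (fun x => ((|x| ^ ((c + 1) / 2) : ℝ) : ℂ) * Gop g h w x) mulHaar := by
    rw [integrable_mulHaar_iff]
    refine hGprod.congr (h0.mono fun x hx => ?_)
    show (∫ s in S, F (s, x) ∂volume)
      = |x|⁻¹ • (((|x| ^ ((c + 1) / 2) : ℝ) : ℂ) * Gop g h w x)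
    rw [hGrep x, Complex.real_smul, ← mul_assoc, ← Complex.ofReal_mul, hweight x hx]
  refine ⟨part1, Filter.Eventually.of_forall fun y hy => ?_⟩
  set χ : ℝ → ℂ := fun x => mulChar' x y with hχdef
  have hχm : Measurable χ := measurable_mulChar' y
  have hχn : ∀ x, ‖χ x‖ = 1 := fun x => norm_mulChar' x y
  set J : ℂ := ∫ x, ((|x| ^ ρ : ℝ) : ℂ) * w x * χ x ∂volume with hJdef
  have hRHS : (∫ x, ((|x| ^ ((c + 1) / 2) : ℝ) : ℂ) * w x * mulChar' x y ∂mulHaar) = J := by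
    rw [hJdef, integral_mulHaar]
    refine integral_congr_ae (h0.mono fun x hx => ?_)
    show |x|⁻¹ • (((|x| ^ ((c + 1) / 2) : ℝ) : ℂ) * w x * mulChar' x y)
      = ((|x| ^ ρ : ℝ) : ℂ) * w x * χ x
    rw [Complex.real_smul, ← mul_assoc, ← mul_assoc, ← Complex.ofReal_mul, hweight x hx]
  set Fy : (Fin d → ℝ) × ℝ → ℂ := fun p => F p * χ p.2 with hFydef
  have hFyint : Integrable Fy ((volume.restrict S).prod volume) := by
    have hb := hFint.bdd_mul ((hχm.comp measurable_snd).aestronglyMeasurable)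
      (Filter.Eventually.of_forall fun p => le_of_eq (hχn p.2))
    exact hb.congr (Filter.Eventually.of_forall fun p => mul_comm _ _)
  have hLHS1 : (∫ x, ((|x| ^ ((c + 1) / 2) : ℝ) : ℂ) * Gop g h w x * mulChar' x y ∂mulHaar)
      = ∫ x, (∫ s in S, Fy (s, x) ∂volume) ∂volume := by
    rw [integral_mulHaar]
    refine integral_congr_ae (h0.mono fun x hx => ?_)
    show |x|⁻¹ • (((|x| ^ ((c + 1) / 2) : ℝ) : ℂ) * Gop g h w x * mulChar' x y)
      = ∫ s in S, Fy (s, x) ∂volume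
    have hmr : (∫ s in S, Fy (s, x) ∂volume) = (∫ s in S, F (s, x) ∂volume) * χ x := by
      simp only [hFydef]
      exact MeasureTheory.integral_mul_const (χ x) (fun s => F (s, x))
    rw [hmr, hGrep x, Complex.real_smul, ← mul_assoc, ← mul_assoc, ← Complex.ofReal_mul,
      hweight x hx]
  have hLHS2 : ∫ x, (∫ s in S, Fy (s, x) ∂volume) ∂volume
      = ∫ s in S, (∫ x, Fy (s, x) ∂volume) ∂volume :=
    (integral_integral_swap (f := fun s x => Fy (s, x)) hFyint).symm
  set e : (Fin d → ℝ) → ℂ := fun s =>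
    Complex.exp (Complex.I * Real.log |h s| * Real.log |y|) *
      (if y < 0 then (Real.sign (h s) : ℂ) else 1) with hedef
  have hinner : ∀ s, h s ≠ 0 → (∫ x, Fy (s, x) ∂volume)
      = (g s : ℂ) * ((|h s| ^ (-(c + 1) / 2) : ℝ) : ℂ) * e s * J := by
    intro s hs
    have hstep1 : ∀ x : ℝ, Fy (s, x)
        = (g s : ℂ) * ((|x| ^ ρ : ℝ) • ((fun u => w u * χ (u / h s)) (h s * x))) := by
      intro x
      simp only [hFydef, hFdef, Complex.real_smul]
      rw [mul_div_cancel_left₀ x hs]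
      ring
    have hsub : (∫ u, (|u| ^ ρ : ℝ) • (w u * χ (u / h s)) ∂volume) = e s * J := by
      rw [hJdef, ← MeasureTheory.integral_const_mul]
      refine integral_congr_ae (h0.mono fun u hu => ?_)
      show (|u| ^ ρ : ℝ) • (w u * χ (u / h s))
        = e s * (((|u| ^ ρ : ℝ) : ℂ) * w u * χ u)
      simp only [hχdef, hedef]
      rw [mulChar'_div (h s) u y hs hu hy, Complex.real_smul]
      ring
    calc (∫ x, Fy (s, x) ∂volume)
        = ∫ x, (g s : ℂ) * ((|x| ^ ρ : ℝ) •
            ((fun u => w u * χ (u / h s)) (h s * x))) ∂volume := by simp_rw [hstep1]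
      _ = (g s : ℂ) * ∫ x, (|x| ^ ρ : ℝ) •
            ((fun u => w u * χ (u / h s)) (h s * x)) ∂volume :=
          MeasureTheory.integral_const_mul _ _
      _ = (g s : ℂ) * ((|h s| ^ (-ρ - 1) : ℝ) •
            ∫ u, (|u| ^ ρ : ℝ) • (w u * χ (u / h s)) ∂volume) := by
          rw [integral_rpow_smul_comp_mul_left ρ (h s) hs (fun u => w u * χ (u / h s))]
      _ = (g s : ℂ) * ((|h s| ^ (-(c + 1) / 2) : ℝ) : ℂ) * e s * J := by
          rw [hsub, hρeq, Complex.real_smul]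
          ring
  have hμ : (∫ s in S, (∫ x, Fy (s, x) ∂volume) ∂volume) = muFun c g h y * J := by
    rw [setIntegral_congr_fun hS (fun s hs => hinner s hs),
      MeasureTheory.integral_mul_const]
    congr 1
    unfold muFun
    rcases lt_or_gt_of_ne hy with hy' | hy'
    · rw [if_neg (by exact fun hcon => absurd hy' (not_lt.2 hcon.le))]
      unfold mMinus
      rw [mul_comm]
      refine setIntegral_congr_fun hS fun s hs => ?_
      simp only [hedef, if_pos hy']
      rw [show ((Real.log |y| : ℝ) : ℂ) * Complex.I * ((Real.log |h s| : ℝ) : ℂ)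
          = Complex.I * ((Real.log |h s| : ℝ) : ℂ) * ((Real.log |y| : ℝ) : ℂ) by ring]
      ring
    · rw [if_pos hy']
      unfold mPlus
      refine setIntegral_congr_fun hS fun s hs => ?_
      simp only [hedef, if_neg (not_lt.2 hy'.le)]
      rw [show Complex.I * ((Real.log |y| : ℝ) : ℂ) * ((Real.log |h s| : ℝ) : ℂ)
          = Complex.I * ((Real.log |h s| : ℝ) : ℂ) * ((Real.log |y| : ℝ) : ℂ) by ring]
      ring
  rw [hLHS1, hLHS2, hμ, hRHS]

end
end

section
/- Let v₁ : ℝ → [0,∞) be measurable with ∫_ℝ |t| v₁(t) dt < ∞, and define ψ(y) := exp(∫_ℝ (e^{iyt} − 1) v₁(t) dt) for y ∈ ℝ. Then for every x ∈ ℝ: |ψ(x)| = exp( − ∫₀^x Im( (F₊(uv₁))(y) ) dy ), where (uv₁)(t) := t·v₁(t) and (F₊ g)(y) := ∫_ℝ e^{iyt} g(t) dt. -/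
open MeasureTheory Real Set Complex

noncomputable section

/-- The infinitely divisible characteristic function
`ψ(y) = exp(∫_ℝ (e^{iyt} - 1) v₁(t) dt)`. -/
def psiCF (v₁ : ℝ → ℝ) (y : ℝ) : ℂ :=
  Complex.exp (∫ t : ℝ, (Complex.exp (Complex.I * y * t) - 1) * (v₁ t : ℂ))

/-- The Fourier transform `(F₊ g)(y) = ∫_ℝ e^{iyt} g(t) dt` of `uv₁ : t ↦ t v₁(t)`. -/
def fourierUV (v₁ : ℝ → ℝ) (y : ℝ) : ℂ :=
  ∫ t : ℝ, Complex.exp (Complex.I * y * t) * ((t * v₁ t : ℝ) : ℂ)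

lemma I_mul_eq (y t : ℝ) : Complex.I * (y : ℂ) * (t : ℂ) = ((y * t : ℝ) : ℂ) * Complex.I := by
  push_cast; ring

/-- Let `v₁ : ℝ → [0,∞)` be measurable with `∫ |t| v₁(t) dt < ∞` and
`ψ(y) = exp(∫ (e^{iyt} - 1) v₁(t) dt)`. Then for every `x ∈ ℝ`,
`|ψ(x)| = exp(-∫₀^x Im((F₊(uv₁))(y)) dy)`. -/
theorem abs_psi_eq_exp_neg_integral_im
    (v₁ : ℝ → ℝ) (hv₁m : Measurable v₁) (hv₁nonneg : ∀ t, 0 ≤ v₁ t)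
    (hv₁int : Integrable (fun t => |t| * v₁ t)) :
    ∀ x : ℝ, ‖psiCF v₁ x‖ =
      Real.exp (-∫ y in (0 : ℝ)..x, (fourierUV v₁ y).im) := by
  intro x
  -- basic measurability
  have hmeas1 : ∀ y : ℝ, Measurable
      (fun t : ℝ => (Complex.exp (Complex.I * y * t) - 1) * (v₁ t : ℂ)) := by
    intro y
    exact ((Complex.measurable_exp.comp (by fun_prop)).sub measurable_const).mul
      (Complex.measurable_ofReal.comp hv₁m)
  have hmeas2 : ∀ y : ℝ, Measurable
      (fun t : ℝ => Complex.exp (Complex.I * y * t) * ((t * v₁ t : ℝ) : ℂ)) := by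
    intro y
    exact (Complex.measurable_exp.comp (by fun_prop)).mul
      (Complex.measurable_ofReal.comp (measurable_id.mul hv₁m))
  -- |e^{iyt} - 1| ≤ 2 |y| |t|
  have habs : ∀ y t : ℝ, ‖Complex.exp (Complex.I * y * t)‖ = 1 := by
    intro y t; rw [I_mul_eq]; exact Complex.norm_exp_ofReal_mul_I _
  have hbound : ∀ y t : ℝ,
      ‖Complex.exp (Complex.I * y * t) - 1‖ ≤ 2 * |y| * |t| := by
    intro y t
    have h1 : ‖Complex.I * y * t‖ = |y| * |t| := by
      simp [map_mul, Complex.norm_real, Complex.norm_I]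
    by_cases h : |y| * |t| ≤ 1
    · have := Complex.norm_exp_sub_one_le (x := Complex.I * y * t) (by rw [h1]; exact h)
      rw [h1] at this; linarith [this]
    · push_neg at h
      calc ‖Complex.exp (Complex.I * y * t) - 1‖
          ≤ ‖Complex.exp (Complex.I * y * t)‖ + ‖(1 : ℂ)‖ := by
            simpa using norm_sub_le _ (1 : ℂ)
        _ = 2 := by rw [habs, norm_one]; norm_num
        _ ≤ 2 * (|y| * |t|) := by nlinarith
        _ = 2 * |y| * |t| := by ring
  -- integrability of the ψ integrand
  have hInt1 : ∀ y : ℝ, Integrable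
      (fun t : ℝ => (Complex.exp (Complex.I * y * t) - 1) * (v₁ t : ℂ)) := by
    intro y
    refine (hv₁int.const_mul (2 * |y|)).mono' (hmeas1 y).aestronglyMeasurable
      (ae_of_all _ fun t => ?_)
    rw [norm_mul, Complex.norm_real, Real.norm_eq_abs, _root_.abs_of_nonneg (hv₁nonneg t)]
    calc ‖Complex.exp (Complex.I * y * t) - 1‖ * v₁ t
        ≤ (2 * |y| * |t|) * v₁ t :=
          mul_le_mul_of_nonneg_right (hbound y t) (hv₁nonneg t)
      _ = 2 * |y| * (|t| * v₁ t) := by ring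
  -- integrability of the Fourier integrand
  have hInt2 : ∀ y : ℝ, Integrable
      (fun t : ℝ => Complex.exp (Complex.I * y * t) * ((t * v₁ t : ℝ) : ℂ)) := by
    intro y
    refine hv₁int.mono' (hmeas2 y).aestronglyMeasurable (ae_of_all _ fun t => ?_)
    rw [norm_mul, Complex.norm_real, Real.norm_eq_abs, habs, one_mul,
      abs_mul, _root_.abs_of_nonneg (hv₁nonneg t)]
  -- LHS = exp(∫ (cos(xt) - 1) v₁(t))
  have hLHS : ‖psiCF v₁ x‖ =
      Real.exp (∫ t : ℝ, (Real.cos (x * t) - 1) * v₁ t) := by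
    rw [psiCF, Complex.norm_exp]
    congr 1
    rw [← RCLike.re_to_complex, ← integral_re (hInt1 x)]
    congr 1
    ext t
    rw [I_mul_eq]
    simp only [RCLike.re_to_complex, Complex.mul_re, Complex.sub_re, Complex.sub_im,
      Complex.one_re, Complex.one_im, Complex.ofReal_re, Complex.ofReal_im,
      Complex.exp_ofReal_mul_I_re, Complex.exp_ofReal_mul_I_im]
    ring
  -- Im(fourierUV y) = ∫ sin(yt) (t v₁(t))
  have hIm : ∀ y : ℝ, (fourierUV v₁ y).im = ∫ t : ℝ, Real.sin (y * t) * (t * v₁ t) := by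
    intro y
    rw [fourierUV, ← RCLike.im_to_complex, ← integral_im (hInt2 y)]
    congr 1
    ext t
    rw [I_mul_eq]
    simp only [RCLike.im_to_complex, Complex.mul_im, Complex.ofReal_re, Complex.ofReal_im,
      Complex.exp_ofReal_mul_I_re, Complex.exp_ofReal_mul_I_im]
    ring
  -- pointwise interval integral in y
  have hkey : ∀ t : ℝ, (∫ y in (0 : ℝ)..x, Real.sin (y * t) * (t * v₁ t)) =
      (1 - Real.cos (x * t)) * v₁ t := by
    intro t
    rw [intervalIntegral.integral_mul_const]
    by_cases ht : t = 0
    · simp [ht]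
    · have : (∫ y in (0 : ℝ)..x, Real.sin (y * t)) = t⁻¹ * (1 - Real.cos (x * t)) := by
        rw [intervalIntegral.integral_comp_mul_right Real.sin ht]
        simp [integral_sin, smul_eq_mul, mul_comm x t]
      rw [this]
      field_simp
  -- Fubini
  have hmeasF : Measurable (fun p : ℝ × ℝ => Real.sin (p.1 * p.2) * (p.2 * v₁ p.2)) :=
    (Real.measurable_sin.comp (measurable_fst.mul measurable_snd)).mul
      (measurable_snd.mul (hv₁m.comp measurable_snd))
  have hgprod : Integrable (fun p : ℝ × ℝ => |p.2| * v₁ p.2)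
      ((volume.restrict (Set.uIoc (0 : ℝ) x)).prod volume) := by
    have h1 : Integrable (fun t => |t| * v₁ t)
        ((volume.restrict (Set.uIoc (0 : ℝ) x)) Set.univ • volume) :=
      hv₁int.smul_measure (by
        simp only [Measure.restrict_apply_univ]
        exact (measure_Ioc_lt_top).ne)
    rw [← Measure.map_snd_prod] at h1
    exact (integrable_map_measure (measurable_id.abs.mul hv₁m).aestronglyMeasurable measurable_snd.aemeasurable).mp h1
  have hFprod : Integrable (Function.uncurry fun y t : ℝ => Real.sin (y * t) * (t * v₁ t))
      ((volume.restrict (Set.uIoc (0 : ℝ) x)).prod volume) := by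
    refine hgprod.mono' hmeasF.aestronglyMeasurable (ae_of_all _ fun p => ?_)
    rw [Function.uncurry]
    rw [Real.norm_eq_abs, abs_mul, abs_mul, _root_.abs_of_nonneg (hv₁nonneg p.2)]
    calc |Real.sin (p.1 * p.2)| * (|p.2| * v₁ p.2)
        ≤ 1 * (|p.2| * v₁ p.2) := by
          apply mul_le_mul_of_nonneg_right (Real.abs_sin_le_one _)
          exact mul_nonneg (abs_nonneg _) (hv₁nonneg _)
        _ = |p.2| * v₁ p.2 := one_mul _
  -- RHS : interval integral equals ∫ (1 - cos(xt)) v₁(t)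
  have hRHS : (∫ y in (0 : ℝ)..x, (fourierUV v₁ y).im) =
      ∫ t : ℝ, (1 - Real.cos (x * t)) * v₁ t := by
    have h0 : (∫ y in (0 : ℝ)..x, (fourierUV v₁ y).im) =
        ∫ y in (0 : ℝ)..x, ∫ t : ℝ, Real.sin (y * t) * (t * v₁ t) := by
      apply intervalIntegral.integral_congr
      intro y _
      exact hIm y
    rw [h0, intervalIntegral.intervalIntegral_eq_integral_uIoc,
      integral_integral_swap hFprod, ← integral_smul]
    refine integral_congr_ae (ae_of_all _ fun t : ℝ => ?_)
    beta_reduce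
    rw [← intervalIntegral.intervalIntegral_eq_integral_uIoc]
    exact hkey t
  rw [hLHS, hRHS]
  congr 1
  rw [← integral_neg]
  congr 1
  ext t
  ring
end
end

section
/- Let θ > 0 and β, c ∈ ℝ with q := β + (c−1)/2 > 0, and let f(s) := e^{−θ|s|} for s ∈ ℝ. Then ∫_ℝ f(s)^q ds < ∞, and the function m_f(x) := ∫_ℝ f(s)^q · e^{−i x log f(s)} ds (which equals both m_{f,+} and m_{f,−} for u(x) = |x|^β since f > 0) satisfies |m_f(x)| ≥ γ/(1 + |x|) for all x ∈ ℝ, where γ = (2/θ)(1 + q²)^{−1/2}. -/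
open MeasureTheory Real Set Complex

noncomputable section

lemma aux_integrableOn_cexp_Ioi (z : ℂ) (hz : 0 < z.re) :
    IntegrableOn (fun t : ℝ => Complex.exp (-z * t)) (Ioi (0 : ℝ)) := by
  apply Integrable.mono' (exp_neg_integrableOn_Ioi 0 hz)
  · exact (Continuous.aestronglyMeasurable (by continuity)).restrict
  · filter_upwards with t
    rw [Complex.norm_exp]
    simp [neg_mul]

lemma aux_integral_cexp_Ioi (z : ℂ) (hz : 0 < z.re) :
    ∫ t : ℝ in Ioi (0 : ℝ), Complex.exp (-z * t) = 1 / z := by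
  have hz0 : z ≠ 0 := fun h => by simp [h] at hz
  have hderiv : ∀ t ∈ Ioi (0 : ℝ),
      HasDerivAt (fun t : ℝ => -Complex.exp (-z * t) / z) (Complex.exp (-z * t)) t := by
    intro t _
    have h1 : HasDerivAt (fun t : ℝ => ((t : ℝ) : ℂ)) 1 t := by
      simpa using (hasDerivAt_id t).ofReal_comp
    have h2 : HasDerivAt (fun t : ℝ => -z * (t : ℂ)) (-z) t := by
      simpa using h1.const_mul (-z)
    have h3 := h2.cexp
    have h4 := (h3.div_const z).neg
    simp only [neg_div]
    rw [mul_neg, neg_div, neg_neg, mul_div_assoc, div_self hz0, mul_one] at h4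
    exact h4
  have hcont : ContinuousWithinAt (fun t : ℝ => -Complex.exp (-z * t) / z) (Ici (0:ℝ)) 0 :=
    Continuous.continuousWithinAt (by continuity)
  have htend : Filter.Tendsto (fun t : ℝ => -Complex.exp (-z * t) / z)
      Filter.atTop (nhds 0) := by
    rw [show (0 : ℂ) = -0 / z by simp]
    apply Filter.Tendsto.div_const
    apply Filter.Tendsto.neg
    rw [tendsto_zero_iff_norm_tendsto_zero]
    have heq : (fun t : ℝ => ‖Complex.exp (-z * t)‖) = fun t : ℝ => Real.exp (-(z.re * t)) := by
      funext t
      rw [Complex.norm_exp]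
      simp [neg_mul]
    rw [heq]
    exact Real.tendsto_exp_neg_atTop_nhds_zero.comp
      (Filter.Tendsto.const_mul_atTop hz Filter.tendsto_id)
  have := MeasureTheory.integral_Ioi_of_hasDerivAt_of_tendsto hcont hderiv
    (aux_integrableOn_cexp_Ioi z hz) htend
  rw [this]
  simp [neg_div]

lemma aux_integrableOn_cexp_abs_Ioi (z : ℂ) (hz : 0 < z.re) :
    IntegrableOn (fun s : ℝ => Complex.exp (-z * |s|)) (Ioi (0 : ℝ)) := by
  apply (aux_integrableOn_cexp_Ioi z hz).congr_fun _ measurableSet_Ioi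
  intro s hs; simp [abs_of_pos (show (0:ℝ) < s from hs)]

lemma aux_integrableOn_cexp_abs_Iic (z : ℂ) (hz : 0 < z.re) :
    IntegrableOn (fun s : ℝ => Complex.exp (-z * |s|)) (Iic (0 : ℝ)) := by
  rw [← Measure.map_neg_eq_self (volume : Measure ℝ)]
  have m : MeasurableEmbedding fun x : ℝ => -x := (Homeomorph.neg ℝ).measurableEmbedding
  rw [m.integrableOn_map_iff]
  simp_rw [Function.comp_def, abs_neg, neg_preimage, neg_Iic, neg_zero]
  exact Iff.mpr integrableOn_Ici_iff_integrableOn_Ioi (aux_integrableOn_cexp_abs_Ioi z hz)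

lemma aux_integrable_cexp_abs (z : ℂ) (hz : 0 < z.re) :
    Integrable (fun s : ℝ => Complex.exp (-z * |s|)) := by
  rw [← integrableOn_univ, ← Iic_union_Ioi (a := (0 : ℝ))]
  exact (aux_integrableOn_cexp_abs_Iic z hz).union (aux_integrableOn_cexp_abs_Ioi z hz)

lemma aux_integral_cexp_abs (z : ℂ) (hz : 0 < z.re) :
    ∫ s : ℝ, Complex.exp (-z * |s|) = 2 / z := by
  have hIoi : ∫ s : ℝ in Ioi (0 : ℝ), Complex.exp (-z * |s|) = 1 / z := by
    rw [← aux_integral_cexp_Ioi z hz]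
    refine setIntegral_congr_fun measurableSet_Ioi (fun s hs => ?_)
    rw [abs_of_pos hs]
  have hIic : ∫ s : ℝ in Iic (0 : ℝ), Complex.exp (-z * |s|) = 1 / z := by
    have h := integral_comp_neg_Iic (0 : ℝ) (fun t : ℝ => Complex.exp (-z * |t|))
    simp only [abs_neg, neg_zero] at h
    rw [h, hIoi]
  rw [← intervalIntegral.integral_Iic_add_Ioi (aux_integrableOn_cexp_abs_Iic z hz)
    (aux_integrableOn_cexp_abs_Ioi z hz), hIic, hIoi]
  ring

lemma aux_integrable_exp_abs (b : ℝ) (hb : 0 < b) :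
    Integrable (fun s : ℝ => Real.exp (-b * |s|)) := by
  have hIoi : IntegrableOn (fun s : ℝ => Real.exp (-b * |s|)) (Ioi (0 : ℝ)) := by
    apply (exp_neg_integrableOn_Ioi 0 hb).congr_fun _ measurableSet_Ioi
    intro s hs; simp [abs_of_pos (show (0:ℝ) < s from hs)]
  have hIic : IntegrableOn (fun s : ℝ => Real.exp (-b * |s|)) (Iic (0 : ℝ)) := by
    rw [← Measure.map_neg_eq_self (volume : Measure ℝ)]
    have m : MeasurableEmbedding fun x : ℝ => -x := (Homeomorph.neg ℝ).measurableEmbedding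
    rw [m.integrableOn_map_iff]
    simp_rw [Function.comp_def, abs_neg, neg_preimage, neg_Iic, neg_zero]
    exact Iff.mpr integrableOn_Ici_iff_integrableOn_Ioi hIoi
  rw [← integrableOn_univ, ← Iic_union_Ioi (a := (0 : ℝ))]
  exact hIic.union hIoi

/-- Let `θ > 0` and `q := β + (c-1)/2 > 0`, and `f(s) = e^{-θ|s|}` on
`ℝ`. Then `∫ f(s)^q ds < ∞`, and
`m_f(x) = ∫_ℝ f(s)^q e^{-i x log f(s)} ds` (which equals both `m_{f,+}` and `m_{f,-}`
for `u(x) = |x|^β`, since `f > 0`) satisfies `|m_f(x)| ≥ γ/(1+|x|)` for all `x`, where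
`γ = (2/θ)(1+q²)^{-1/2}`. -/
theorem exponential_kernel_m_lower_bound
    (θ β c : ℝ) (hθ : 0 < θ) (hq : 0 < β + (c - 1) / 2) :
    Integrable (fun s : ℝ => Real.exp (-θ * |s|) ^ (β + (c - 1) / 2)) ∧
    ∀ x : ℝ,
      (2 / θ) / Real.sqrt (1 + (β + (c - 1) / 2) ^ 2) / (1 + |x|) ≤
        ‖∫ s : ℝ, ((Real.exp (-θ * |s|) ^ (β + (c - 1) / 2) : ℝ) : ℂ) *
          Complex.exp (-(Complex.I) * x * Real.log (Real.exp (-θ * |s|)))‖ := by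
  set q : ℝ := β + (c - 1) / 2 with hqdef
  have hpow : ∀ s : ℝ, Real.exp (-θ * |s|) ^ q = Real.exp (-(θ * q) * |s|) := by
    intro s
    rw [← Real.exp_log (Real.rpow_pos_of_pos (Real.exp_pos _) q),
      Real.log_rpow (Real.exp_pos _), Real.log_exp]
    ring_nf
  constructor
  · have := aux_integrable_exp_abs (θ * q) (by positivity)
    exact this.congr (by filter_upwards with s using (hpow s).symm)
  · intro x
    set z : ℂ := (θ * q : ℝ) - (θ * x : ℝ) * Complex.I with hzdef
    have hzre : 0 < z.re := by simp [hzdef]; positivity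
    have hint : (∫ s : ℝ, ((Real.exp (-θ * |s|) ^ q : ℝ) : ℂ) *
        Complex.exp (-(Complex.I) * x * Real.log (Real.exp (-θ * |s|))))
        = ∫ s : ℝ, Complex.exp (-z * |s|) := by
      congr 1
      funext s
      rw [hpow s, Real.log_exp, Complex.ofReal_exp, ← Complex.exp_add]
      congr 1
      push_cast [hzdef]
      ring
    rw [hint, aux_integral_cexp_abs z hzre]
    have habsz : ‖z‖ = Real.sqrt ((θ * q) ^ 2 + (θ * x) ^ 2) := by
      rw [Complex.norm_def, Complex.normSq_apply]
      have hre : z.re = θ * q := by simp [hzdef]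
      have him : z.im = -(θ * x) := by simp [hzdef]
      rw [hre, him]
      ring_nf
    have hnorm : ‖(2 : ℂ) / z‖ = 2 / Real.sqrt ((θ * q) ^ 2 + (θ * x) ^ 2) := by
      rw [norm_div, habsz]
      norm_num
    rw [hnorm]
    have hsq : 0 < Real.sqrt ((θ * q) ^ 2 + (θ * x) ^ 2) := by
      apply Real.sqrt_pos.mpr; positivity
    have hRHS : Real.sqrt ((θ * q) ^ 2 + (θ * x) ^ 2) ≤
        θ * (Real.sqrt (1 + q ^ 2) * (1 + |x|)) := by
      have h1 : θ * (Real.sqrt (1 + q ^ 2) * (1 + |x|)) =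
          Real.sqrt (θ ^ 2 * ((1 + q ^ 2) * (1 + |x|) ^ 2)) := by
        rw [Real.sqrt_mul (by positivity), Real.sqrt_mul (by positivity),
          Real.sqrt_sq hθ.le, Real.sqrt_sq (by positivity)]
      rw [h1]
      apply Real.sqrt_le_sqrt
      have hx2 : |x| ^ 2 = x ^ 2 := sq_abs x
      nlinarith [abs_nonneg x, sq_nonneg (θ * q), sq_nonneg θ, sq_nonneg (θ * q * |x|)]
    calc (2 / θ) / Real.sqrt (1 + q ^ 2) / (1 + |x|)
        = 2 / (θ * (Real.sqrt (1 + q ^ 2) * (1 + |x|))) := by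
          rw [div_div, div_div]
      _ ≤ 2 / Real.sqrt ((θ * q) ^ 2 + (θ * x) ^ 2) := by
          apply div_le_div_of_nonneg_left (by norm_num) hsq hRHS
end
end
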